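/- Let ε, δ > 0 and let Ω ⊂ ℝⁿ be a path-connected (ε,δ)-domain. Then Ω is Ahlfors n-regular: there is a constant c > 0 such that L_n(Q(x,r) ∩ Ω) ≥ c r^n for all x ∈ Ω and r ∈ (0,1]. -/

import Mathlib

open Metric Set MeasureTheory
open scoped ENNReal NNReal

lemma aux_cb_subset {E : Type*} [NormedAddCommGroup E] [NormedSpace ℝ E]
    (Ω : Set E) (hopen : IsOpen Ω) {z : E} (hz : z ∈ Ω) {ρ : ℝ} (hρ0 : 0 ≤ ρ)
    (h : ρ < infDist z (frontier Ω)) : closedBall z ρ ⊆ Ω := by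
  have hnf : ∀ w ∈ closedBall z ρ, w ∉ frontier Ω := by
    intro w hw hwf
    exact absurd (infDist_le_dist_of_mem hwf) (not_le.2 (lt_of_le_of_lt (by
      simpa [dist_comm] using hw) h))
  refine IsPreconnected.subset_left_of_subset_union hopen (isClosed_closure.isOpen_compl)
    (disjoint_compl_right.mono_left subset_closure) ?_ ⟨z, mem_closedBall_self hρ0, hz⟩
    (convex_closedBall z ρ).isPreconnected
  intro w hw
  by_cases hcl : w ∈ closure Ω
  · left
    have : w ∈ interior Ω := by
      by_contra hint
      exact hnf w hw ⟨hcl, hint⟩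
    rwa [hopen.interior_eq] at this
  · exact Or.inr hcl

/-- Let `ε, δ > 0` and let `Ω ⊆ ℝⁿ` be a path-connected
`(ε,δ)`-domain: an open set such that for any `x, y ∈ Ω` with `‖x−y‖ < δ` there is a
rectifiable path `γ ⊆ Ω` of length `≤ ‖x−y‖/ε` joining `x` to `y` with
`dist(z, ∂Ω) > ε ‖z−x‖ ‖z−y‖ / ‖y−x‖` for every `z` on `γ`.  Then `Ω` is Ahlfors
`n`-regular: there is `c > 0` with `L_n(Q(x,r) ∩ Ω) ≥ c rⁿ` for all `x ∈ Ω`, `r ∈ (0,1]`. -/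
theorem statement5 (n : ℕ) (ε δ : ℝ) (hε : 0 < ε) (hδ : 0 < δ)
    (Ω : Set (Fin n → ℝ)) (hopen : IsOpen Ω) (hpc : IsPathConnected Ω)
    (hdom : ∀ x ∈ Ω, ∀ y ∈ Ω, ‖x - y‖ < δ →
      ∃ γ : ℝ → (Fin n → ℝ), ContinuousOn γ (Set.Icc 0 1) ∧ γ 0 = x ∧ γ 1 = y ∧
        (∀ t ∈ Set.Icc (0:ℝ) 1, γ t ∈ Ω) ∧
        eVariationOn γ (Set.Icc 0 1) ≤ ENNReal.ofReal (‖x - y‖ / ε) ∧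
        (∀ t ∈ Set.Icc (0:ℝ) 1,
          ε * (‖γ t - x‖ * ‖γ t - y‖) / ‖y - x‖ < Metric.infDist (γ t) (frontier Ω))) :
    ∃ c : ℝ, 0 < c ∧ ∀ x ∈ Ω, ∀ r : ℝ, 0 < r → r ≤ 1 →
      ENNReal.ofReal (c * r ^ n) ≤ MeasureTheory.volume (closedBall x r ∩ Ω) := by

  classical
  -- a fixed small closed ball inside Ω
  obtain ⟨x₀, hx₀, -⟩ := id hpc
  obtain ⟨ρ₁, hρ₁, hball₁⟩ := Metric.isOpen_iff.1 hopen x₀ hx₀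
  set ρ₀ : ℝ := ρ₁ / 2 with hρ₀def
  have hρ₀ : 0 < ρ₀ := by positivity
  have hball₀ : closedBall x₀ ρ₀ ⊆ Ω :=
    (closedBall_subset_ball (by linarith)).trans hball₁
  set m : ℝ := min ε 1 with hmdef
  have hm : 0 < m := lt_min hε one_pos
  have hm1 : m ≤ 1 := min_le_right _ _
  have hmε : m ≤ ε := min_le_left _ _
  set b : ℝ := min (2 * ρ₀) (m / 2 * min 1 (δ / 2)) with hbdef
  have hb : 0 < b := lt_min (by positivity) (by positivity)
  refine ⟨b ^ n, pow_pos hb n, ?_⟩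
  intro x hx r hr hr1
  set r' : ℝ := min r (δ / 2) with hr'def
  have hr' : 0 < r' := lt_min hr (by positivity)
  have hr'r : r' ≤ r := min_le_left _ _
  have hr'δ : r' < δ := lt_of_le_of_lt (min_le_right _ _) (by linarith)
  by_cases hbig : ∃ p ∈ Ω, r' ≤ ‖p - x‖
  · -- main case
    obtain ⟨p, hp, hpx⟩ := hbig
    -- find y ∈ Ω with ‖y - x‖ = r'
    obtain ⟨γ₀, hγ₀⟩ := hpc.joinedIn x hx p hp
    have hcont₀ : Continuous fun t : ℝ => ‖γ₀.extend t - x‖ :=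
      (γ₀.continuous_extend.sub continuous_const).norm
    have hiv := intermediate_value_Icc (zero_le_one (α := ℝ)) hcont₀.continuousOn
    have hr'mem : r' ∈ Icc ‖γ₀.extend 0 - x‖ ‖γ₀.extend 1 - x‖ := by
      simp only [Path.extend_zero, Path.extend_one, sub_self, norm_zero]
      exact ⟨hr'.le, hpx⟩
    obtain ⟨t₀, ht₀, ht₀y⟩ := hiv hr'mem
    set y : Fin n → ℝ := γ₀.extend t₀ with hydef
    have hy : y ∈ Ω := by
      rw [hydef, Path.extend_apply γ₀ ht₀]
      exact hγ₀ _
    have hyx : ‖y - x‖ = r' := ht₀y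
    have hxy : ‖x - y‖ = r' := by rw [norm_sub_rev]; exact hyx
    obtain ⟨γ, hγcont, hγ0, hγ1, hγΩ, _, hγdist⟩ :=
      hdom x hx y hy (by rw [hxy]; exact hr'δ)
    -- find z on γ with ‖z - x‖ = r'/2
    have hcontg : ContinuousOn (fun t => ‖γ t - x‖) (Icc (0:ℝ) 1) :=
      (hγcont.sub continuousOn_const).norm
    have hiv2 := intermediate_value_Icc (zero_le_one (α := ℝ)) hcontg
    have hmem2 : r' / 2 ∈ Icc ‖γ 0 - x‖ ‖γ 1 - x‖ := by
      rw [hγ0, hγ1, sub_self, norm_zero, hyx]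
      exact ⟨by positivity, by linarith⟩
    obtain ⟨t₁, ht₁, ht₁z⟩ := hiv2 hmem2
    set z : Fin n → ℝ := γ t₁ with hzdef
    have hzΩ : z ∈ Ω := hγΩ t₁ ht₁
    have hzx : ‖z - x‖ = r' / 2 := ht₁z
    have hzy : r' / 2 ≤ ‖z - y‖ := by
      have := norm_add_le (y - z) (z - x)
      rw [sub_add_sub_cancel] at this
      rw [hyx, hzx] at this
      rw [norm_sub_rev]
      linarith
    set ρ : ℝ := m * r' / 4 with hρdef
    have hρpos : 0 < ρ := by positivity
    have hkey : ρ < infDist z (frontier Ω) := by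
      refine lt_of_le_of_lt ?_ (hγdist t₁ ht₁)
      rw [← hzdef, hyx, hzx]
      rw [hρdef, div_le_div_iff₀ (by norm_num) hr']
      have h1 : ε * (r' / 2) ≤ ε * ‖z - y‖ := mul_le_mul_of_nonneg_left hzy hε.le
      have h2 : r' * (ε * (r' / 2)) ≤ r' * (ε * ‖z - y‖) :=
        mul_le_mul_of_nonneg_left h1 hr'.le
      have h3 : m * (r' * r') ≤ ε * (r' * r') :=
        mul_le_mul_of_nonneg_right hmε (mul_nonneg hr'.le hr'.le)
      nlinarith [h2, h3]
    have hcbΩ : closedBall z ρ ⊆ Ω := aux_cb_subset Ω hopen hzΩ hρpos.le hkey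
    have hcbQ : closedBall z ρ ⊆ closedBall x r := by
      intro w hw
      rw [mem_closedBall] at hw ⊢
      have hzxd : dist z x = r' / 2 := by rw [dist_eq_norm]; exact hzx
      have := dist_triangle w z x
      nlinarith [hr'.le]
    calc ENNReal.ofReal (b ^ n * r ^ n)
        ≤ ENNReal.ofReal ((2 * ρ) ^ n) := by
          apply ENNReal.ofReal_le_ofReal
          rw [← mul_pow]
          apply pow_le_pow_left₀ (by positivity)
          have h1 : min 1 (δ / 2) * r ≤ r' := by
            rcases le_total (1:ℝ) (δ / 2) with h | h
            · rw [min_eq_left h]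
              rw [hr'def]
              rcases min_cases r (δ/2) with ⟨he,_⟩ | ⟨he,_⟩ <;> rw [he] <;> linarith
            · rw [min_eq_right h, hr'def]
              rcases min_cases r (δ/2) with ⟨he,hc⟩ | ⟨he,_⟩ <;> rw [he] <;> nlinarith
          have hb2 : b ≤ m / 2 * min 1 (δ / 2) := min_le_right _ _
          have hmin0 : 0 < min 1 (δ/2) := lt_min one_pos (by positivity)
          calc b * r ≤ m / 2 * min 1 (δ / 2) * r := by
                apply mul_le_mul_of_nonneg_right hb2 hr.le
            _ ≤ m / 2 * r' := by
                rw [mul_assoc]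
                exact mul_le_mul_of_nonneg_left h1 (by positivity)
            _ = 2 * ρ := by rw [hρdef]; ring
      _ = volume (closedBall z ρ) := by
          rw [Real.volume_pi_closedBall z hρpos.le, Fintype.card_fin]
      _ ≤ volume (closedBall x r ∩ Ω) :=
          measure_mono (subset_inter hcbQ hcbΩ)
  · -- small case: Ω ⊆ closedBall x r
    push_neg at hbig
    have hΩsub : Ω ⊆ closedBall x r := by
      intro p hp
      rw [mem_closedBall, dist_eq_norm]
      exact le_trans (hbig p hp).le hr'r
    have heq : closedBall x r ∩ Ω = Ω := inter_eq_right.2 hΩsub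
    rw [heq]
    calc ENNReal.ofReal (b ^ n * r ^ n)
        ≤ ENNReal.ofReal ((2 * ρ₀) ^ n) := by
          apply ENNReal.ofReal_le_ofReal
          calc b ^ n * r ^ n ≤ b ^ n * 1 := by
                apply mul_le_mul_of_nonneg_left _ (by positivity)
                exact pow_le_one₀ hr.le hr1
            _ = b ^ n := mul_one _
            _ ≤ (2 * ρ₀) ^ n := pow_le_pow_left₀ hb.le (min_le_left _ _) n
      _ = volume (closedBall x₀ ρ₀) := by
          rw [Real.volume_pi_closedBall x₀ hρ₀.le, Fintype.card_fin]
      _ ≤ volume Ω := measure_mono hball₀
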